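/- Let d be a positive integer and S ⊆ ℝ^d a finite non-empty set. Suppose T_2(S) has covering dimension at most 0, i.e., every finite open cover of T_2(S) admits a finite open refinement by pairwise disjoint sets. Let a be the dimension of the affine span of S. Then for every integer r with 1 ≤ r ≤ |S| − a, the set T_r(S) is non-empty, i.e., S admits a Tverberg r-partition. (This is the substance of the paper's Theorem 2, confirming Kalai's cascade conjecture when dim T_2(S) ≤ 0: it yields Σ_{r=1}^{|S|} dim T_r(S) ≥ 0.) -/

import Mathlib

/-- The Tverberg set `T_r(S)` of a finite point set `S`: points `p` admitting a
partition of `S` into `r` pairwise disjoint parts whose convex hulls all contain `p`. -/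
def TverSet {E : Type*} [AddCommGroup E] [Module ℝ E] (r : ℕ) (S : Finset E) : Set E :=
  {p | ∃ A : Fin r → Finset E,
    (∀ i j, i ≠ j → Disjoint (A i) (A j)) ∧
    (⋃ i, (A i : Set E)) = (S : Set E) ∧
    ∀ i, p ∈ convexHull ℝ (A i : Set E)}

/-- `X` has covering dimension at most `k`: every finite open cover admits a finite
open refinement in which any `k + 2` distinct members have empty intersection. -/
def CovDimLE (X : Type*) [TopologicalSpace X] (k : ℕ) : Prop :=
  ∀ 𝒰 : Finset (Set X), (∀ U ∈ 𝒰, IsOpen U) → ⋃₀ (𝒰 : Set (Set X)) = Set.univ →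
    ∃ 𝒱 : Finset (Set X), (∀ V ∈ 𝒱, IsOpen V) ∧ ⋃₀ (𝒱 : Set (Set X)) = Set.univ ∧
      (∀ V ∈ 𝒱, ∃ U ∈ 𝒰, V ⊆ U) ∧
      ∀ 𝒮 : Finset (Set X), 𝒮 ⊆ 𝒱 → k + 2 ≤ 𝒮.card → ⋂₀ (𝒮 : Set (Set X)) = ∅

noncomputable section CascadeProofAux

namespace CascadeProof

/-- positive part -/
def pp (t : ℝ) : ℝ := max t 0

lemma pp_nonneg (t : ℝ) : 0 ≤ pp t := le_max_right _ _

lemma pp_of_nonneg {t : ℝ} (h : 0 ≤ t) : pp t = t := max_eq_left h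

lemma pp_of_nonpos {t : ℝ} (h : t ≤ 0) : pp t = 0 := max_eq_right h

lemma pp_sub (t : ℝ) : pp t - pp (-t) = t := by
  rcases le_total t 0 with h | h
  · rw [pp_of_nonpos h, pp_of_nonneg (neg_nonneg.2 h)]; ring
  · rw [pp_of_nonneg h, pp_of_nonpos (neg_nonpos.2 h)]; ring

lemma pp_smul {c : ℝ} (hc : 0 ≤ c) (t : ℝ) : pp (c * t) = c * pp t := by
  rcases le_total t 0 with h | h
  · rw [pp_of_nonpos h, pp_of_nonpos (mul_nonpos_of_nonneg_of_nonpos hc h), mul_zero]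
  · rw [pp_of_nonneg h, pp_of_nonneg (mul_nonneg hc h)]

lemma pp_pos {t : ℝ} (h : 0 < t) : 0 < pp t := by rw [pp_of_nonneg h.le]; exact h

lemma pos_of_pp_pos {t : ℝ} (h : 0 < pp t) : 0 < t := by
  by_contra hc
  rw [pp_of_nonpos (not_lt.1 hc)] at h
  exact lt_irrefl _ h

lemma continuous_pp : Continuous pp := continuous_id.max continuous_const

lemma covdim_subsingleton {X : Type*} [TopologicalSpace X] [T1Space X]
    (h : CovDimLE X 0) {K : Set X} (hK : IsPreconnected K) : K.Subsingleton := by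
  intro x hx y hy
  by_contra hxy
  classical
  obtain ⟨𝒱, hVopen, hVcover, hVref, hVdisj⟩ :=
    h {({y}ᶜ : Set X), ({x}ᶜ : Set X)}
      (by
        intro U hU
        simp only [Finset.mem_insert, Finset.mem_singleton] at hU
        rcases hU with rfl | rfl
        · exact isOpen_compl_singleton
        · exact isOpen_compl_singleton)
      (by
        apply Set.eq_univ_of_forall
        intro z
        by_cases hz : z = y
        · exact ⟨({x}ᶜ : Set X), by simp, by simp [hz]; exact fun hc => hxy (hc ▸ rfl)⟩
        · exact ⟨({y}ᶜ : Set X), by simp, hz⟩)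
  have hxmem : ∃ V ∈ 𝒱, x ∈ V := by
    have : (x : X) ∈ ⋃₀ (𝒱 : Set (Set X)) := by rw [hVcover]; trivial
    simpa using this
  obtain ⟨V, hV, hxV⟩ := hxmem
  set Ω : Set X := ⋃₀ ((𝒱.erase V : Finset (Set X)) : Set (Set X)) with hΩ
  have hΩopen : IsOpen Ω :=
    isOpen_sUnion (fun U hU => hVopen _ (Finset.mem_of_mem_erase hU))
  have hdisj : Disjoint V Ω := by
    rw [hΩ, Set.disjoint_sUnion_right]
    intro U hU
    rw [Finset.mem_coe] at hU
    have hUV : U ≠ V := Finset.ne_of_mem_erase hU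
    have hcard : (2 : ℕ) ≤ ({V, U} : Finset (Set X)).card := by
      rw [Finset.card_insert_of_notMem (by simpa using hUV.symm), Finset.card_singleton]
    have hsub : ({V, U} : Finset (Set X)) ⊆ 𝒱 := by
      intro W hW
      simp only [Finset.mem_insert, Finset.mem_singleton] at hW
      rcases hW with rfl | rfl
      · exact hV
      · exact Finset.mem_of_mem_erase hU
    have := hVdisj {V, U} hsub hcard
    simp only [Finset.coe_insert, Finset.coe_singleton, Set.sInter_insert,
      Set.sInter_singleton] at this
    exact Set.disjoint_iff_inter_eq_empty.2 this
  have hcover : K ⊆ V ∪ Ω := by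
    intro z hz
    have hz' : z ∈ ⋃₀ (𝒱 : Set (Set X)) := by rw [hVcover]; trivial
    obtain ⟨U, hU, hzU⟩ := hz'
    rw [Finset.mem_coe] at hU
    by_cases hUV : U = V
    · exact Or.inl (hUV ▸ hzU)
    · exact Or.inr ⟨U, by rw [Finset.mem_coe]; exact Finset.mem_erase.2 ⟨hUV, hU⟩, hzU⟩
  have hsub : K ⊆ V :=
    hK.subset_left_of_subset_union (hVopen V hV) hΩopen hdisj hcover ⟨x, hx, hxV⟩
  obtain ⟨U, hU, hVU⟩ := hVref V hV
  simp only [Finset.mem_insert, Finset.mem_singleton] at hU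
  rcases hU with rfl | rfl
  · exact (hVU (hsub hy)) rfl
  · exact (hVU (hsub hx)) rfl



open Finset

variable {d : ℕ} (S : Finset (Fin d → ℝ))

/-- The linear map whose kernel is the space of affine dependences of `S`. -/
def Phi : ({x // x ∈ S} → ℝ) →ₗ[ℝ] ℝ × (Fin d → ℝ) where
  toFun w := (∑ i : {x // x ∈ S}, w i, ∑ i : {x // x ∈ S}, w i • (i : Fin d → ℝ))
  map_add' u v := by
    simp [Prod.mk_add_mk, Finset.sum_add_distrib, add_smul]
  map_smul' c w := by
    simp [Prod.smul_mk, Finset.mul_sum, Finset.smul_sum, smul_smul]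

lemma phi_apply (w : {x // x ∈ S} → ℝ) :
    Phi S w = (∑ i, w i, ∑ i, w i • (i : Fin d → ℝ)) := rfl

lemma mem_ker_phi {w : {x // x ∈ S} → ℝ} :
    w ∈ LinearMap.ker (Phi S) ↔
      (∑ i, w i = 0 ∧ ∑ i, w i • (i : Fin d → ℝ) = 0) := by
  rw [LinearMap.mem_ker]
  show (∑ i, w i, ∑ i, w i • (i : Fin d → ℝ)) = (0 : ℝ × (Fin d → ℝ)) ↔ _
  rw [Prod.mk_eq_zero]

/-- The Radon point associated to a dependence. -/
noncomputable def RadonPt (w : {x // x ∈ S} → ℝ) : Fin d → ℝ :=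
  (∑ i, pp (w i))⁻¹ • ∑ i, pp (w i) • (i : Fin d → ℝ)

variable {S}

lemma exists_pos_coord {w : {x // x ∈ S} → ℝ} (hw1 : ∑ i, w i = 0) (hw0 : w ≠ 0) :
    ∃ i, 0 < w i := by
  by_contra h
  push_neg at h
  have : ∀ i ∈ Finset.univ, w i = 0 := by
    rw [← Finset.sum_eq_zero_iff_of_nonpos (fun i _ => h i)]
    exact hw1
  exact hw0 (funext fun i => this i (Finset.mem_univ i))

lemma sum_pp_pos {w : {x // x ∈ S} → ℝ} (hw1 : ∑ i, w i = 0) (hw0 : w ≠ 0) :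
    0 < ∑ i, pp (w i) := by
  obtain ⟨i₀, hi₀⟩ := exists_pos_coord hw1 hw0
  calc (0:ℝ) < pp (w i₀) := pp_pos hi₀
    _ ≤ ∑ i, pp (w i) :=
      Finset.single_le_sum (fun i _ => pp_nonneg (w i)) (Finset.mem_univ i₀)

lemma sum_pp_neg_eq {w : {x // x ∈ S} → ℝ} (hw1 : ∑ i, w i = 0) :
    ∑ i, pp (-(w i)) = ∑ i, pp (w i) := by
  have h : ∀ i, pp (-(w i)) = pp (w i) - w i := fun i => by
    have := pp_sub (w i); linarith
  simp only [h, Finset.sum_sub_distrib, hw1, sub_zero]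

lemma sum_pp_neg_smul_eq {w : {x // x ∈ S} → ℝ}
    (hw2 : ∑ i, w i • (i : Fin d → ℝ) = 0) :
    ∑ i, pp (-(w i)) • (i : Fin d → ℝ) = ∑ i, pp (w i) • (i : Fin d → ℝ) := by
  have h : ∀ i, pp (-(w i)) = pp (w i) - w i := fun i => by
    have := pp_sub (w i); linarith
  simp only [h, sub_smul, Finset.sum_sub_distrib, hw2, sub_zero]

lemma radonPt_smul_pos {c : ℝ} (hc : 0 < c) (w : {x // x ∈ S} → ℝ)
    (hs : ∑ i, pp (w i) ≠ 0) :
    RadonPt S (c • w) = RadonPt S w := by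
  unfold RadonPt
  have h1 : ∀ i, pp ((c • w) i) = c * pp (w i) := fun i => by
    show pp (c * w i) = _
    exact pp_smul hc.le _
  simp only [h1, ← Finset.mul_sum, mul_smul, ← Finset.smul_sum, mul_inv]
  rw [smul_smul, smul_smul]
  congr 1
  field_simp

lemma radonPt_neg {w : {x // x ∈ S} → ℝ} (hw1 : ∑ i, w i = 0)
    (hw2 : ∑ i, w i • (i : Fin d → ℝ) = 0) :
    RadonPt S (-w) = RadonPt S w := by
  unfold RadonPt
  have h1 : ∀ i, (-w) i = -(w i) := fun i => rfl
  simp only [h1, sum_pp_neg_eq hw1, sum_pp_neg_smul_eq hw2]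

lemma radonPt_smul {c : ℝ} (hc : c ≠ 0) {w : {x // x ∈ S} → ℝ} (hw1 : ∑ i, w i = 0)
    (hw2 : ∑ i, w i • (i : Fin d → ℝ) = 0) (hw0 : w ≠ 0) :
    RadonPt S (c • w) = RadonPt S w := by
  rcases lt_or_gt_of_ne hc with h | h
  · have hneg : c • w = (-c) • (-w) := by rw [neg_smul_neg]
    have h2 : ∑ i, pp ((-w) i) = ∑ i, pp (w i) := by
      simp only [Pi.neg_apply]
      exact sum_pp_neg_eq hw1
    have hsum : ∑ i, pp ((-w) i) ≠ 0 := by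
      rw [h2]; exact (sum_pp_pos hw1 hw0).ne'
    rw [hneg, radonPt_smul_pos (by linarith : (0:ℝ) < -c) (-w) hsum, radonPt_neg hw1 hw2]
  · exact radonPt_smul_pos h w (sum_pp_pos hw1 hw0).ne'


lemma radonPt_mem_tver2 {w : {x // x ∈ S} → ℝ} (hw1 : ∑ i, w i = 0)
    (hw2 : ∑ i, w i • (i : Fin d → ℝ) = 0) (hw0 : w ≠ 0) :
    RadonPt S w ∈ TverSet 2 S := by
  classical
  set t₁ : Finset {x // x ∈ S} := Finset.univ.filter (fun i => 0 ≤ w i) with ht₁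
  set t₂ : Finset {x // x ∈ S} := Finset.univ.filter (fun i => w i < 0) with ht₂
  set p₁ : Finset (Fin d → ℝ) := t₁.image Subtype.val with hp₁
  set p₂ : Finset (Fin d → ℝ) := t₂.image Subtype.val with hp₂
  have hspos : 0 < ∑ i, pp (w i) := sum_pp_pos hw1 hw0
  have hsum₁ : ∑ i ∈ t₁, pp (w i) = ∑ i, pp (w i) := by
    apply Finset.sum_subset (Finset.subset_univ t₁)
    intro i _ hi
    rw [ht₁, Finset.mem_filter] at hi
    push_neg at hi
    exact pp_of_nonpos (le_of_lt (hi (Finset.mem_univ i)))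
  have hvec₁ : ∑ i ∈ t₁, pp (w i) • (i : Fin d → ℝ) = ∑ i, pp (w i) • (i : Fin d → ℝ) := by
    apply Finset.sum_subset (Finset.subset_univ t₁)
    intro i _ hi
    rw [ht₁, Finset.mem_filter] at hi
    push_neg at hi
    rw [pp_of_nonpos (le_of_lt (hi (Finset.mem_univ i))), zero_smul]
  have hsum₂ : ∑ i ∈ t₂, pp (-(w i)) = ∑ i, pp (w i) := by
    rw [← sum_pp_neg_eq hw1]
    apply Finset.sum_subset (Finset.subset_univ t₂)
    intro i _ hi
    rw [ht₂, Finset.mem_filter] at hi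
    push_neg at hi
    exact pp_of_nonpos (neg_nonpos.2 (hi (Finset.mem_univ i)))
  have hvec₂ : ∑ i ∈ t₂, pp (-(w i)) • (i : Fin d → ℝ) = ∑ i, pp (w i) • (i : Fin d → ℝ) := by
    rw [← sum_pp_neg_smul_eq hw2]
    apply Finset.sum_subset (Finset.subset_univ t₂)
    intro i _ hi
    rw [ht₂, Finset.mem_filter] at hi
    push_neg at hi
    rw [pp_of_nonpos (neg_nonpos.2 (hi (Finset.mem_univ i))), zero_smul]
  have hd : Disjoint p₁ p₂ := by
    rw [Finset.disjoint_left]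
    rintro x hx₁ hx₂
    obtain ⟨i₁, hi₁, rfl⟩ := Finset.mem_image.1 hx₁
    obtain ⟨i₂, hi₂, he⟩ := Finset.mem_image.1 hx₂
    rw [ht₁, Finset.mem_filter] at hi₁
    rw [ht₂, Finset.mem_filter] at hi₂
    rw [Subtype.ext he] at hi₂
    exact absurd hi₁.2 (not_le.2 hi₂.2)
  refine ⟨![p₁, p₂], ?_, ?_, ?_⟩
  · intro i j hij
    fin_cases i <;> fin_cases j
    · exact absurd rfl hij
    · simpa using hd
    · simpa using hd.symm
    · exact absurd rfl hij
  · ext x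
    simp only [Set.mem_iUnion, Finset.mem_coe]
    constructor
    · rintro ⟨i, hi⟩
      fin_cases i
      · simp only [Matrix.cons_val_zero] at hi
        obtain ⟨i₁, _, rfl⟩ := Finset.mem_image.1 hi
        exact i₁.2
      · simp only [Matrix.cons_val_one, Matrix.head_cons] at hi
        obtain ⟨i₂, _, rfl⟩ := Finset.mem_image.1 hi
        exact i₂.2
    · intro hx
      rcases le_or_gt 0 (w ⟨x, hx⟩) with h | h
      · refine ⟨0, ?_⟩
        simp only [Matrix.cons_val_zero]
        exact Finset.mem_image_of_mem Subtype.val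
          (Finset.mem_filter.2 ⟨Finset.mem_univ (⟨x, hx⟩ : {x // x ∈ S}), h⟩)
      · refine ⟨1, ?_⟩
        simp only [Matrix.cons_val_one, Matrix.head_cons]
        exact Finset.mem_image_of_mem Subtype.val
          (Finset.mem_filter.2 ⟨Finset.mem_univ (⟨x, hx⟩ : {x // x ∈ S}), h⟩)
  · intro i
    fin_cases i
    · show RadonPt S w ∈ convexHull ℝ (↑p₁ : Set (Fin d → ℝ))
      have key : RadonPt S w
          = t₁.centerMass (fun i => pp (w i)) (fun i => (i : Fin d → ℝ)) := by
        unfold RadonPt Finset.centerMass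
        rw [hsum₁, hvec₁]
      rw [key]
      exact Finset.centerMass_mem_convexHull t₁ (fun i _ => pp_nonneg _)
        (by rw [hsum₁]; exact hspos)
        (fun i hi => Finset.mem_coe.2 (Finset.mem_image_of_mem _ hi))
    · show RadonPt S w ∈ convexHull ℝ (↑p₂ : Set (Fin d → ℝ))
      have key : RadonPt S w
          = t₂.centerMass (fun i => pp (-(w i))) (fun i => (i : Fin d → ℝ)) := by
        unfold RadonPt Finset.centerMass
        rw [hsum₂, hvec₂]
      rw [key]
      exact Finset.centerMass_mem_convexHull t₂ (fun i _ => pp_nonneg _)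
        (by rw [hsum₂]; exact hspos)
        (fun i hi => Finset.mem_coe.2 (Finset.mem_image_of_mem _ hi))


lemma finrank_ker_phi (hS : S.Nonempty) :
    Module.finrank ℝ (LinearMap.ker (Phi S)) +
      (Module.finrank ℝ (vectorSpan ℝ (S : Set (Fin d → ℝ))) + 1) = S.card := by
  classical
  have hrange : LinearMap.range (Phi S) =
      Submodule.span ℝ (Set.range (fun i : {x // x ∈ S} => ((1:ℝ), (i : Fin d → ℝ)))) := by
    apply le_antisymm
    · rintro y ⟨w, rfl⟩
      have hdecomp : Phi S w = ∑ i, w i • ((1:ℝ), (i : Fin d → ℝ)) := by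
        show ((∑ i, w i, ∑ i, w i • (i : Fin d → ℝ)) : ℝ × (Fin d → ℝ)) = _
        rw [Prod.ext_iff]
        constructor
        · rw [Prod.fst_sum]
          simp [Prod.smul_mk]
        · rw [Prod.snd_sum]
          simp [Prod.smul_mk]
      rw [hdecomp]
      exact Submodule.sum_mem _ fun i _ =>
        Submodule.smul_mem _ _ (Submodule.subset_span ⟨i, rfl⟩)
    · rw [Submodule.span_le]
      rintro y ⟨i, rfl⟩
      set e : {x // x ∈ S} → ℝ := Pi.single i (1:ℝ) with he
      refine ⟨e, ?_⟩
      have h1 : ∑ j, e j = 1 := by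
        simp only [he]
        rw [Finset.sum_pi_single']
        simp
      have h2 : ∑ j, e j • (j : Fin d → ℝ) = (i : Fin d → ℝ) := by
        rw [Finset.sum_eq_single i]
        · simp only [he]
          rw [Pi.single_eq_same, one_smul]
        · intro j _ hj
          simp only [he]
          rw [Pi.single_eq_of_ne hj, zero_smul]
        · intro h
          exact absurd (Finset.mem_univ i) h
      rw [phi_apply, h1, h2]
  obtain ⟨x₀, hx₀⟩ := hS
  have hspan : Module.finrank ℝ
      (Submodule.span ℝ (Set.range (fun i : {x // x ∈ S} => ((1:ℝ), (i : Fin d → ℝ)))))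
      = Module.finrank ℝ (vectorSpan ℝ (S : Set (Fin d → ℝ))) + 1 := by
    set U1 : Submodule ℝ (ℝ × (Fin d → ℝ)) := ℝ ∙ ((1:ℝ), x₀) with hU1
    set U2 : Submodule ℝ (ℝ × (Fin d → ℝ)) :=
      Submodule.map (LinearMap.inr ℝ ℝ (Fin d → ℝ)) (vectorSpan ℝ (S : Set (Fin d → ℝ)))
      with hU2
    have hsup : Submodule.span ℝ
        (Set.range (fun i : {x // x ∈ S} => ((1:ℝ), (i : Fin d → ℝ)))) = U1 ⊔ U2 := by
      apply le_antisymm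
      · rw [Submodule.span_le]
        rintro y ⟨i, rfl⟩
        have h1 : ((1:ℝ), (i : Fin d → ℝ)) =
            ((1:ℝ), x₀) + ((0:ℝ), (i : Fin d → ℝ) - x₀) := by
          rw [Prod.mk_add_mk]
          norm_num
        show ((1:ℝ), (i : Fin d → ℝ)) ∈ U1 ⊔ U2
        rw [h1]
        refine Submodule.add_mem _
          (Submodule.mem_sup_left (Submodule.mem_span_singleton_self _))
          (Submodule.mem_sup_right ?_)
        exact ⟨(i : Fin d → ℝ) - x₀, vsub_mem_vectorSpan ℝ i.2 hx₀, rfl⟩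
      · refine sup_le ?_ ?_
        · rw [hU1, Submodule.span_singleton_le_iff_mem]
          exact Submodule.subset_span ⟨⟨x₀, hx₀⟩, rfl⟩
        · rw [hU2, vectorSpan_def, Submodule.map_span, Submodule.span_le]
          rintro y ⟨v, hv, rfl⟩
          obtain ⟨p, hp, q, hq, rfl⟩ := Set.mem_vsub.1 hv
          have heq : (LinearMap.inr ℝ ℝ (Fin d → ℝ)) (p -ᵥ q)
              = ((1:ℝ), p) - ((1:ℝ), q) := by
            rw [Prod.mk_sub_mk]
            norm_num
          show (LinearMap.inr ℝ ℝ (Fin d → ℝ)) (p -ᵥ q) ∈ Submodule.span ℝ _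
          rw [heq]
          exact Submodule.sub_mem _
            (Submodule.subset_span ⟨⟨p, hp⟩, rfl⟩)
            (Submodule.subset_span ⟨⟨q, hq⟩, rfl⟩)
    have hinf : U1 ⊓ U2 = ⊥ := by
      rw [Submodule.eq_bot_iff]
      rintro z ⟨hz1, hz2⟩
      obtain ⟨c, rfl⟩ := Submodule.mem_span_singleton.1 hz1
      obtain ⟨v, hv, hveq⟩ := hz2
      have hc : c = 0 := by
        have h := congrArg Prod.fst hveq
        simpa using h.symm
      rw [hc, zero_smul]
    have h1 : Module.finrank ℝ U1 = 1 := by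
      apply finrank_span_singleton
      intro h
      exact one_ne_zero (congrArg Prod.fst h)
    have h2 : Module.finrank ℝ U2
        = Module.finrank ℝ (vectorSpan ℝ (S : Set (Fin d → ℝ))) := by
      rw [hU2]
      exact (Submodule.equivMapOfInjective _ LinearMap.inr_injective
        (vectorSpan ℝ (S : Set (Fin d → ℝ)))).finrank_eq.symm
    have hkey := Submodule.finrank_sup_add_finrank_inf_eq U1 U2
    rw [hinf, finrank_bot, add_zero, h1, h2] at hkey
    rw [hsup, hkey]
    omega
  have hrn := LinearMap.finrank_range_add_finrank_ker (Phi S)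
  rw [hrange, hspan] at hrn
  have hcard : Module.finrank ℝ ({x // x ∈ S} → ℝ) = S.card := by
    rw [Module.finrank_fintype_fun_eq_card]
    exact Fintype.card_coe S
  omega


lemma exists_indep_pair (h2 : 2 ≤ Module.finrank ℝ (LinearMap.ker (Phi S))) :
    ∃ u v : {x // x ∈ S} → ℝ, u ∈ LinearMap.ker (Phi S) ∧ v ∈ LinearMap.ker (Phi S) ∧
      (∀ s t : ℝ, s • u + t • v = 0 → s = 0 ∧ t = 0) := by
  set W := LinearMap.ker (Phi S) with hW
  have b := Module.finBasis ℝ W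
  set i0 : Fin (Module.finrank ℝ W) := ⟨0, by omega⟩ with hi0
  set i1 : Fin (Module.finrank ℝ W) := ⟨1, by omega⟩ with hi1
  have hne : i1 ≠ i0 := by
    rw [hi0, hi1]
    intro h
    simpa using congrArg Fin.val h
  refine ⟨(b i0 : {x // x ∈ S} → ℝ), (b i1 : {x // x ∈ S} → ℝ), (b i0).2, (b i1).2, ?_⟩
  intro s t hst
  have hWeq : s • (b i0) + t • (b i1) = (0 : W) := by
    apply Subtype.ext
    push_cast
    exact hst
  have hrepr : b.repr (s • b i0 + t • b i1) = 0 := by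
    rw [hWeq, map_zero]
  rw [map_add, map_smul, map_smul, b.repr_self, b.repr_self] at hrepr
  constructor
  · have h := DFunLike.congr_fun hrepr i0
    simpa [Finsupp.single_eq_of_ne' hne] using h
  · have h := DFunLike.congr_fun hrepr i1
    simpa [Finsupp.single_eq_of_ne' (Ne.symm hne)] using h

lemma radonPt_eq_of_indep (hdim : CovDimLE ↥(TverSet 2 S) 0)
    {u v : {x // x ∈ S} → ℝ}
    (hu : u ∈ LinearMap.ker (Phi S)) (hv : v ∈ LinearMap.ker (Phi S))
    (hind : ∀ s t : ℝ, s • u + t • v = 0 → s = 0 ∧ t = 0) :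
    RadonPt S u = RadonPt S v := by
  classical
  obtain ⟨hu1, hu2⟩ := (mem_ker_phi S).1 hu
  obtain ⟨hv1, hv2⟩ := (mem_ker_phi S).1 hv
  set φ : (Fin 2 → ℝ) → ({x // x ∈ S} → ℝ) := fun c => c 0 • u + c 1 • v with hφ
  have hφ1 : ∀ c, ∑ i, φ c i = 0 := by
    intro c
    simp only [hφ, Pi.add_apply, Pi.smul_apply, smul_eq_mul]
    rw [Finset.sum_add_distrib, ← Finset.mul_sum, ← Finset.mul_sum, hu1, hv1]
    ring
  have hφ2 : ∀ c, ∑ i, φ c i • (i : Fin d → ℝ) = 0 := by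
    intro c
    have hpt : ∀ i : {x // x ∈ S}, φ c i • (i : Fin d → ℝ)
        = c 0 • (u i • (i : Fin d → ℝ)) + c 1 • (v i • (i : Fin d → ℝ)) := by
      intro i
      show (c 0 * u i + c 1 * v i) • (i : Fin d → ℝ) = _
      rw [add_smul, mul_smul, mul_smul]
    simp only [hpt]
    rw [Finset.sum_add_distrib, ← Finset.smul_sum, ← Finset.smul_sum, hu2, hv2,
      smul_zero, smul_zero, add_zero]
  have hφ0 : ∀ c : Fin 2 → ℝ, c ≠ 0 → φ c ≠ 0 := by
    intro c hc h0
    obtain ⟨h1, h2⟩ := hind _ _ h0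
    apply hc
    funext j
    fin_cases j
    · exact h1
    · exact h2
  set T : Set (Fin 2 → ℝ) := {c | c ≠ 0} with hT
  have hden_pos : ∀ c : T, 0 < ∑ i, pp (φ (c : Fin 2 → ℝ) i) := fun c =>
    sum_pp_pos (hφ1 c) (hφ0 c c.2)
  have hcont_w : ∀ i : {x // x ∈ S}, Continuous fun c : T => φ (c : Fin 2 → ℝ) i := by
    intro i
    have hfe : (fun c : T => φ (c : Fin 2 → ℝ) i)
        = fun c : T => (c : Fin 2 → ℝ) 0 * u i + (c : Fin 2 → ℝ) 1 * v i := rfl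
    rw [hfe]
    exact (((continuous_apply 0).comp continuous_subtype_val).mul continuous_const).add
      (((continuous_apply 1).comp continuous_subtype_val).mul continuous_const)
  have hcont_den : Continuous fun c : T => ∑ i, pp (φ (c : Fin 2 → ℝ) i) :=
    continuous_finset_sum _ fun i _ => continuous_pp.comp (hcont_w i)
  have hcont_num : Continuous fun c : T =>
      ∑ i, pp (φ (c : Fin 2 → ℝ) i) • (i : Fin d → ℝ) :=
    continuous_finset_sum _ fun i _ =>
      (continuous_pp.comp (hcont_w i)).smul continuous_const
  have hcont : Continuous fun c : T => RadonPt S (φ (c : Fin 2 → ℝ)) :=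
    (hcont_den.inv₀ fun c => (hden_pos c).ne').smul hcont_num
  set Ψ : T → ↥(TverSet 2 S) := fun c =>
    ⟨RadonPt S (φ (c : Fin 2 → ℝ)),
      radonPt_mem_tver2 (hφ1 c) (hφ2 c) (hφ0 c c.2)⟩ with hΨ
  have hΨcont : Continuous Ψ := Continuous.subtype_mk hcont _
  have hTconn : IsPreconnected T := by
    have h2 : 1 < Module.rank ℝ (Fin 2 → ℝ) := by
      rw [rank_fun']
      simp only [Fintype.card_fin]
      exact_mod_cast one_lt_two
    have hconn := isConnected_compl_singleton_of_one_lt_rank h2 (0 : Fin 2 → ℝ)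
    have hTe : T = ({0}ᶜ : Set (Fin 2 → ℝ)) := by
      ext c
      simp [hT]
    rw [hTe]
    exact hconn.isPreconnected
  haveI : PreconnectedSpace T := Subtype.preconnectedSpace hTconn
  have hrangeconn : IsPreconnected (Set.range Ψ) := isPreconnected_range hΨcont
  have hsub := covdim_subsingleton hdim hrangeconn
  have e1 : (![1, 0] : Fin 2 → ℝ) ∈ T := by
    show (![1, 0] : Fin 2 → ℝ) ≠ 0
    intro h
    have := congrFun h 0
    norm_num at this
  have e2 : (![0, 1] : Fin 2 → ℝ) ∈ T := by
    show (![0, 1] : Fin 2 → ℝ) ≠ 0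
    intro h
    have := congrFun h 1
    norm_num at this
  have heq := hsub (Set.mem_range_self (⟨![1,0], e1⟩ : T))
    (Set.mem_range_self (⟨![0,1], e2⟩ : T))
  have hval := congrArg Subtype.val heq
  have hu' : φ ![1,0] = u := by
    funext i
    show (1:ℝ) * u i + (0:ℝ) * v i = u i
    ring
  have hv' : φ ![0,1] = v := by
    funext i
    show (0:ℝ) * u i + (1:ℝ) * v i = v i
    ring
  show RadonPt S u = RadonPt S v
  rw [← hu', ← hv']
  exact hval


lemma exists_universal_radon (hdim : CovDimLE ↥(TverSet 2 S) 0)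
    (hfin : 1 ≤ Module.finrank ℝ (LinearMap.ker (Phi S))) :
    ∃ q : Fin d → ℝ, ∀ w ∈ LinearMap.ker (Phi S), w ≠ 0 →
      ∑ i, pp (w i) • (i : Fin d → ℝ) = (∑ i, pp (w i)) • q := by
  have hne : LinearMap.ker (Phi S) ≠ ⊥ := by
    intro h
    rw [h, finrank_bot] at hfin
    omega
  obtain ⟨l, hl, hl0⟩ := (Submodule.ne_bot_iff _).1 hne
  obtain ⟨hl1, hl2⟩ := (mem_ker_phi S).1 hl
  refine ⟨RadonPt S l, ?_⟩
  intro w hw hw0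
  obtain ⟨hw1, hw2⟩ := (mem_ker_phi S).1 hw
  have hrp : RadonPt S w = RadonPt S l := by
    by_cases hdep : ∃ c : ℝ, w = c • l
    · obtain ⟨c, rfl⟩ := hdep
      have hc : c ≠ 0 := by
        rintro rfl
        rw [zero_smul] at hw0
        exact hw0 rfl
      exact radonPt_smul hc hl1 hl2 hl0
    · apply radonPt_eq_of_indep hdim hw hl
      intro s t hst
      by_cases hs : s = 0
      · subst hs
        rw [zero_smul, zero_add] at hst
        rcases smul_eq_zero.1 hst with ht | hl0'
        · exact ⟨rfl, ht⟩
        · exact absurd hl0' hl0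
      · exfalso
        apply hdep
        refine ⟨-(s⁻¹ * t), ?_⟩
        have h1 : s • w = -(t • l) := eq_neg_of_add_eq_zero_left hst
        have h3 := congrArg (fun z => s⁻¹ • z) h1
        simp only [smul_smul, smul_neg] at h3
        rw [inv_mul_cancel₀ hs, one_smul] at h3
        rw [h3, neg_smul]
  have hkey : (∑ i, pp (w i)) • RadonPt S w = ∑ i, pp (w i) • (i : Fin d → ℝ) := by
    unfold RadonPt
    rw [smul_smul, mul_inv_cancel₀ (sum_pp_pos hw1 hw0).ne', one_smul]
  rw [← hkey, hrp]


variable (S) in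
/-- The base polytope of coefficient vectors representing `q`. -/
def Bset (q : Fin d → ℝ) : Set ({x // x ∈ S} → ℝ) :=
  {w | (∀ i, 0 ≤ w i) ∧ ∑ i, w i = 1 ∧ ∑ i, w i • (i : Fin d → ℝ) = q}

lemma div_mem_Bset {q : Fin d → ℝ}
    (hq : ∀ w ∈ LinearMap.ker (Phi S), w ≠ 0 →
      ∑ i, pp (w i) • (i : Fin d → ℝ) = (∑ i, pp (w i)) • q)
    {w : {x // x ∈ S} → ℝ} (hw : w ∈ LinearMap.ker (Phi S)) (hw0 : w ≠ 0) :
    (fun i => pp (w i) / (∑ j, pp (w j))) ∈ Bset S q := by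
  obtain ⟨hw1, _⟩ := (mem_ker_phi S).1 hw
  have hs : 0 < ∑ j, pp (w j) := sum_pp_pos hw1 hw0
  refine ⟨fun i => div_nonneg (pp_nonneg _) hs.le, ?_, ?_⟩
  · rw [← Finset.sum_div, div_self hs.ne']
  · have hpt : ∀ i : {x // x ∈ S}, (pp (w i) / (∑ j, pp (w j))) • (i : Fin d → ℝ)
        = (∑ j, pp (w j))⁻¹ • (pp (w i) • (i : Fin d → ℝ)) := by
      intro i
      rw [div_eq_inv_mul, mul_smul]
    simp only [hpt]
    rw [← Finset.smul_sum, hq w hw hw0, smul_smul, inv_mul_cancel₀ hs.ne', one_smul]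

lemma extreme_disjoint {q : Fin d → ℝ}
    (hq : ∀ w ∈ LinearMap.ker (Phi S), w ≠ 0 →
      ∑ i, pp (w i) • (i : Fin d → ℝ) = (∑ i, pp (w i)) • q)
    {α β : {x // x ∈ S} → ℝ}
    (hα : α ∈ (Bset S q).extremePoints ℝ) (hβ : β ∈ (Bset S q).extremePoints ℝ)
    (hne : α ≠ β) : ∀ i, α i = 0 ∨ β i = 0 := by
  obtain ⟨hαB, hαext⟩ := mem_extremePoints.1 hα
  obtain ⟨hβB, hβext⟩ := mem_extremePoints.1 hβ
  obtain ⟨hα0, hα1, hα2⟩ := hαB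
  obtain ⟨hβ0, hβ1, hβ2⟩ := hβB
  have hγi : ∀ i, (α - β) i = α i - β i := fun i => rfl
  have hγ1 : ∑ i, (α - β) i = 0 := by
    simp only [hγi, Finset.sum_sub_distrib, hα1, hβ1, sub_self]
  have hγ2 : ∑ i, (α - β) i • (i : Fin d → ℝ) = 0 := by
    simp only [hγi, sub_smul, Finset.sum_sub_distrib, hα2, hβ2, sub_self]
  have hγker : (α - β) ∈ LinearMap.ker (Phi S) := (mem_ker_phi S).2 ⟨hγ1, hγ2⟩
  have hγ0 : (α - β) ≠ 0 := sub_ne_zero.2 hne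
  have hs : 0 < ∑ i, pp ((α - β) i) := sum_pp_pos hγ1 hγ0
  have hsmulq : ∑ i, pp ((α - β) i) • (i : Fin d → ℝ)
      = (∑ i, pp ((α - β) i)) • q := hq _ hγker hγ0
  have hpple : ∀ i, pp ((α - β) i) ≤ α i := by
    intro i
    apply max_le _ (hα0 i)
    rw [hγi]
    exact sub_le_self _ (hβ0 i)
  have hs1 : (∑ i, pp ((α - β) i)) ≤ 1 := by
    rw [← hα1]
    exact Finset.sum_le_sum fun i _ => hpple i
  intro i
  rcases eq_or_lt_of_le hs1 with hseq | hslt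
  · have hω0 : ∀ j ∈ Finset.univ, α j - pp ((α - β) j) = 0 := by
      rw [← Finset.sum_eq_zero_iff_of_nonneg (fun j _ => sub_nonneg.2 (hpple j))]
      rw [Finset.sum_sub_distrib, hα1, hseq, sub_self]
    have hαi : α i = pp ((α - β) i) := by
      have := hω0 i (Finset.mem_univ i)
      linarith
    rcases le_or_gt ((α - β) i) 0 with hle | hgt
    · left
      rw [hαi, pp_of_nonpos hle]
    · right
      have hpe : pp ((α - β) i) = (α - β) i := pp_of_nonneg hgt.le
      rw [hpe, hγi] at hαi
      linarith
  · have h1s : (0:ℝ) < 1 - ∑ i, pp ((α - β) i) := by linarith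
    have hδB : (fun j => pp ((α - β) j) / (∑ k, pp ((α - β) k))) ∈ Bset S q :=
      div_mem_Bset hq hγker hγ0
    have hεB : (fun j => pp (-((α - β) j)) / (∑ k, pp ((α - β) k))) ∈ Bset S q := by
      have hmem := div_mem_Bset hq (Submodule.neg_mem _ hγker) (neg_ne_zero.2 hγ0)
      have hnegi : ∀ j, (-(α - β)) j = -((α - β) j) := fun j => rfl
      simp only [hnegi, sum_pp_neg_eq hγ1] at hmem
      exact hmem
    have hωB : (fun j => (α j - pp ((α - β) j)) / (1 - ∑ k, pp ((α - β) k)))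
        ∈ Bset S q := by
      refine ⟨fun j => div_nonneg (sub_nonneg.2 (hpple j)) h1s.le, ?_, ?_⟩
      · rw [← Finset.sum_div, Finset.sum_sub_distrib, hα1, div_self h1s.ne']
      · have hpt : ∀ j : {x // x ∈ S},
            ((α j - pp ((α - β) j)) / (1 - ∑ k, pp ((α - β) k))) • (j : Fin d → ℝ)
            = (1 - ∑ k, pp ((α - β) k))⁻¹ •
              ((α j • (j : Fin d → ℝ)) - (pp ((α - β) j) • (j : Fin d → ℝ))) := by
          intro j
          rw [div_eq_inv_mul, mul_smul, sub_smul]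
        simp only [hpt]
        rw [← Finset.smul_sum, Finset.sum_sub_distrib, hα2, hsmulq]
        rw [show q - (∑ i, pp ((α - β) i)) • q = (1 - ∑ i, pp ((α - β) i)) • q by
          rw [sub_smul, one_smul]]
        rw [smul_smul, inv_mul_cancel₀ h1s.ne', one_smul]
    have hαseg : α ∈ openSegment ℝ
        (fun j => pp ((α - β) j) / (∑ k, pp ((α - β) k)))
        (fun j => (α j - pp ((α - β) j)) / (1 - ∑ k, pp ((α - β) k))) := by
      refine ⟨∑ k, pp ((α - β) k), 1 - ∑ k, pp ((α - β) k), hs, h1s, by ring, ?_⟩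
      funext j
      show (∑ k, pp ((α - β) k)) * (pp ((α - β) j) / (∑ k, pp ((α - β) k)))
        + (1 - ∑ k, pp ((α - β) k)) *
          ((α j - pp ((α - β) j)) / (1 - ∑ k, pp ((α - β) k))) = α j
      rw [mul_div_cancel₀ _ hs.ne', mul_div_cancel₀ _ h1s.ne']
      ring
    have hβseg : β ∈ openSegment ℝ
        (fun j => pp (-((α - β) j)) / (∑ k, pp ((α - β) k)))
        (fun j => (α j - pp ((α - β) j)) / (1 - ∑ k, pp ((α - β) k))) := by
      refine ⟨∑ k, pp ((α - β) k), 1 - ∑ k, pp ((α - β) k), hs, h1s, by ring, ?_⟩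
      funext j
      show (∑ k, pp ((α - β) k)) * (pp (-((α - β) j)) / (∑ k, pp ((α - β) k)))
        + (1 - ∑ k, pp ((α - β) k)) *
          ((α j - pp ((α - β) j)) / (1 - ∑ k, pp ((α - β) k))) = β j
      rw [mul_div_cancel₀ _ hs.ne', mul_div_cancel₀ _ h1s.ne']
      have hsub := pp_sub ((α - β) j)
      have hγval : (α - β) j = α j - β j := rfl
      linarith
    have hδα := (hαext _ hδB _ hωB hαseg).1
    have hεβ := (hβext _ hεB _ hωB hβseg).1
    by_contra hcon
    push_neg at hcon
    obtain ⟨hαi, hβi⟩ := hcon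
    have hαpos : 0 < α i := lt_of_le_of_ne (hα0 i) (Ne.symm hαi)
    have hβpos : 0 < β i := lt_of_le_of_ne (hβ0 i) (Ne.symm hβi)
    have hδval : pp ((α - β) i) / (∑ k, pp ((α - β) k)) = α i := congrFun hδα i
    have hεval : pp (-((α - β) i)) / (∑ k, pp ((α - β) k)) = β i := congrFun hεβ i
    have hγpos : 0 < (α - β) i := by
      apply pos_of_pp_pos
      have : 0 < pp ((α - β) i) / (∑ k, pp ((α - β) k)) := hδval ▸ hαpos
      by_contra hle
      rw [not_lt] at hle
      have h0 : pp ((α - β) i) = 0 := le_antisymm hle (pp_nonneg _)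
      rw [h0, zero_div] at this
      exact lt_irrefl _ this
    have hγneg : 0 < -((α - β) i) := by
      apply pos_of_pp_pos
      have : 0 < pp (-((α - β) i)) / (∑ k, pp ((α - β) k)) := hεval ▸ hβpos
      by_contra hle
      rw [not_lt] at hle
      have h0 : pp (-((α - β) i)) = 0 := le_antisymm hle (pp_nonneg _)
      rw [h0, zero_div] at this
      exact lt_irrefl _ this
    linarith


lemma exists_parts (hdim : CovDimLE ↥(TverSet 2 S) 0) {r : ℕ} (hr1 : 1 ≤ r)
    (hfin : 1 ≤ Module.finrank ℝ (LinearMap.ker (Phi S)))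
    (hrk : r ≤ Module.finrank ℝ (LinearMap.ker (Phi S)) + 1) :
    ∃ (q : Fin d → ℝ) (α : Fin r → ({x // x ∈ S} → ℝ)),
      (∀ j, α j ∈ Bset S q) ∧
      (∀ j k, j ≠ k → ∀ i, α j i = 0 ∨ α k i = 0) := by
  classical
  obtain ⟨q, hq⟩ := exists_universal_radon hdim hfin
  refine ⟨q, ?_⟩
  have hBconv : Convex ℝ (Bset S q) := by
    intro x hx y hy a b ha hb hab
    obtain ⟨hx0, hx1, hx2⟩ := hx
    obtain ⟨hy0, hy1, hy2⟩ := hy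
    have happ : ∀ i, (a • x + b • y) i = a * x i + b * y i := fun i => rfl
    refine ⟨fun i => by
      rw [happ]
      exact add_nonneg (mul_nonneg ha (hx0 i)) (mul_nonneg hb (hy0 i)), ?_, ?_⟩
    · simp only [happ]
      rw [Finset.sum_add_distrib, ← Finset.mul_sum, ← Finset.mul_sum, hx1, hy1,
        mul_one, mul_one]
      exact hab
    · have hpt : ∀ i : {x // x ∈ S}, (a * x i + b * y i) • (i : Fin d → ℝ)
          = a • (x i • (i : Fin d → ℝ)) + b • (y i • (i : Fin d → ℝ)) := fun i => by
        rw [add_smul, mul_smul, mul_smul]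
      simp only [happ, hpt]
      rw [Finset.sum_add_distrib, ← Finset.smul_sum, ← Finset.smul_sum, hx2, hy2,
        ← add_smul, hab, one_smul]
  have hBclosed : IsClosed (Bset S q) := by
    have hsplit : Bset S q = {w : {x // x ∈ S} → ℝ | ∀ i, 0 ≤ w i} ∩
        ({w | ∑ i, w i = 1} ∩ {w | ∑ i, w i • (i : Fin d → ℝ) = q}) := by
      ext w
      simp only [Bset, Set.mem_inter_iff, Set.mem_setOf_eq]
    rw [hsplit]
    have h1 : IsClosed {w : {x // x ∈ S} → ℝ | ∀ i, 0 ≤ w i} := by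
      have he : {w : {x // x ∈ S} → ℝ | ∀ i, 0 ≤ w i} = ⋂ i, {w | 0 ≤ w i} := by
        ext w
        simp
      rw [he]
      exact isClosed_iInter fun i => isClosed_le continuous_const (continuous_apply i)
    have h2 : IsClosed {w : {x // x ∈ S} → ℝ | ∑ i, w i = 1} :=
      isClosed_eq (continuous_finset_sum _ fun i _ => continuous_apply i) continuous_const
    have h3 : IsClosed {w : {x // x ∈ S} → ℝ | ∑ i, w i • (i : Fin d → ℝ) = q} :=
      isClosed_eq (continuous_finset_sum _ fun i _ =>
        (continuous_apply i).smul continuous_const) continuous_const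
    exact h1.inter (h2.inter h3)
  have hBcomp : IsCompact (Bset S q) := by
    apply IsCompact.of_isClosed_subset
      (isCompact_univ_pi fun _ : {x // x ∈ S} => isCompact_Icc (a := (0:ℝ)) (b := 1))
      hBclosed
    intro w hw
    rw [Set.mem_univ_pi]
    intro i
    exact ⟨hw.1 i, by
      rw [← hw.2.1]
      exact Finset.single_le_sum (fun j _ => hw.1 j) (Finset.mem_univ i)⟩
  have hker_ne : LinearMap.ker (Phi S) ≠ ⊥ := by
    intro h
    rw [h, finrank_bot] at hfin
    omega
  obtain ⟨l, hl, hl0⟩ := (Submodule.ne_bot_iff _).1 hker_ne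
  have hBne : (Bset S q).Nonempty := ⟨_, div_mem_Bset hq hl hl0⟩
  have hget : ∃ t : Finset ({x // x ∈ S} → ℝ),
      (↑t ⊆ (Bset S q).extremePoints ℝ) ∧ t.card = r := by
    by_cases hEfin : ((Bset S q).extremePoints ℝ).Finite
    · rcases le_or_gt r hEfin.toFinset.card with hle | hlt
      · obtain ⟨t, hts, htc⟩ := Finset.exists_subset_card_eq hle
        exact ⟨t, fun x hx => hEfin.mem_toFinset.1 (hts hx), htc⟩
      · exfalso
        have hBeq : Bset S q = convexHull ℝ ((Bset S q).extremePoints ℝ) := by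
          have hKM := closure_convexHull_extremePoints hBcomp hBconv
          rw [(hEfin.isClosed_convexHull (𝕜 := ℝ)).closure_eq] at hKM
          exact hKM.symm
        have hWle : LinearMap.ker (Phi S) ≤ vectorSpan ℝ (Bset S q) := by
          intro μ hμ
          rcases eq_or_ne μ 0 with rfl | hμ0
          · exact Submodule.zero_mem _
          obtain ⟨hμ1, hμ2⟩ := (mem_ker_phi S).1 hμ
          have hspos := sum_pp_pos hμ1 hμ0
          have hApos : (fun i => pp (μ i) / (∑ j, pp (μ j))) ∈ Bset S q :=
            div_mem_Bset hq hμ hμ0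
          have hAneg : (fun i => pp (-(μ i)) / (∑ j, pp (μ j))) ∈ Bset S q := by
            have hmem := div_mem_Bset hq (Submodule.neg_mem _ hμ) (neg_ne_zero.2 hμ0)
            have hnegi : ∀ j : {x // x ∈ S}, (-μ) j = -(μ j) := fun j => rfl
            simp only [hnegi, sum_pp_neg_eq hμ1] at hmem
            exact hmem
          have hμeq : μ = (∑ j, pp (μ j)) •
              ((fun i => pp (μ i) / (∑ j, pp (μ j)))
                - (fun i => pp (-(μ i)) / (∑ j, pp (μ j)))) := by
            funext i
            show μ i = (∑ j, pp (μ j)) *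
              (pp (μ i) / (∑ j, pp (μ j)) - pp (-(μ i)) / (∑ j, pp (μ j)))
            rw [div_sub_div_same]
            rw [mul_comm, div_mul_cancel₀ _ hspos.ne']
            have := pp_sub (μ i)
            linarith
          rw [hμeq]
          exact Submodule.smul_mem _ _ (vsub_mem_vectorSpan ℝ hApos hAneg)
        have hle1 : Module.finrank ℝ (LinearMap.ker (Phi S))
            ≤ Module.finrank ℝ (vectorSpan ℝ (Bset S q)) := Submodule.finrank_mono hWle
        have hvs : vectorSpan ℝ (Bset S q)
            = vectorSpan ℝ ((Bset S q).extremePoints ℝ) := by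
          rw [← direction_affineSpan, ← direction_affineSpan]
          conv_lhs => rw [hBeq, affineSpan_convexHull]
        rw [hvs] at hle1
        have htEne : hEfin.toFinset.Nonempty := by
          obtain ⟨x, hx⟩ := hBcomp.extremePoints_nonempty hBne
          exact ⟨x, hEfin.mem_toFinset.2 hx⟩
        have hc : hEfin.toFinset.card = (hEfin.toFinset.card - 1) + 1 :=
          (Nat.succ_pred_eq_of_pos (Finset.card_pos.2 htEne)).symm
        have hfr := finrank_vectorSpan_image_finset_le ℝ
          (id : ({x // x ∈ S} → ℝ) → ({x // x ∈ S} → ℝ)) hEfin.toFinset hc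
        rw [Finset.image_id] at hfr
        rw [hEfin.coe_toFinset] at hfr
        omega
    · obtain ⟨t, hts, htc⟩ := Set.Infinite.exists_subset_card_eq hEfin r
      exact ⟨t, hts, htc⟩
  obtain ⟨t, hts, htc⟩ := hget
  have e : Fin r ≃ {x // x ∈ t} := (t.equivFin.trans (finCongr htc)).symm
  refine ⟨fun j => ((e j : {x // x ∈ t}) : {x // x ∈ S} → ℝ), ?_, ?_⟩
  · intro j
    exact extremePoints_subset (hts (e j).2)
  · intro j k hjk i
    apply extreme_disjoint hq (hts (e j).2) (hts (e k).2)
    intro hval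
    exact hjk (e.injective (Subtype.ext hval))


lemma tver_nonempty_of_parts {r : ℕ} (hr1 : 1 ≤ r) {q : Fin d → ℝ}
    {α : Fin r → ({x // x ∈ S} → ℝ)} (hB : ∀ j, α j ∈ Bset S q)
    (hdisj : ∀ j k, j ≠ k → ∀ i, α j i = 0 ∨ α k i = 0) :
    (TverSet r S).Nonempty := by
  classical
  set T : Fin r → Finset {x // x ∈ S} :=
    fun j => Finset.univ.filter (fun i => α j i ≠ 0) with hT
  set A' : Fin r → Finset (Fin d → ℝ) := fun j => (T j).image Subtype.val with hA'
  set L : Finset (Fin d → ℝ) := S \ Finset.univ.biUnion A' with hL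
  set z0 : Fin r := ⟨0, hr1⟩ with hz0
  set A : Fin r → Finset (Fin d → ℝ) := fun j => if j = z0 then A' z0 ∪ L else A' j with hA
  have hA'dis : ∀ j k, j ≠ k → Disjoint (A' j) (A' k) := by
    intro j k hjk
    rw [Finset.disjoint_left]
    rintro x hxj hxk
    obtain ⟨i1, hi1, rfl⟩ := Finset.mem_image.1 hxj
    obtain ⟨i2, hi2, he⟩ := Finset.mem_image.1 hxk
    rw [Subtype.ext he] at hi2
    have h1 := (Finset.mem_filter.1 hi1).2
    have h2 := (Finset.mem_filter.1 hi2).2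
    rcases hdisj j k hjk i1 with h | h
    · exact h1 h
    · exact h2 h
  have hLdis : ∀ j, Disjoint (A' j) L := by
    intro j
    rw [Finset.disjoint_left]
    intro x hx hxL
    rw [hL, Finset.mem_sdiff] at hxL
    exact hxL.2 (Finset.mem_biUnion.2 ⟨j, Finset.mem_univ j, hx⟩)
  have hA'S : ∀ j, A' j ⊆ S := by
    intro j x hx
    obtain ⟨i1, _, rfl⟩ := Finset.mem_image.1 hx
    exact i1.2
  have hAS : ∀ j, A j ⊆ S := by
    intro j
    simp only [hA]
    by_cases hj : j = z0
    · rw [if_pos hj]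
      exact Finset.union_subset (hA'S z0) (by rw [hL]; exact Finset.sdiff_subset)
    · rw [if_neg hj]
      exact hA'S j
  have hA'sub : ∀ j, A' j ⊆ A j := by
    intro j
    simp only [hA]
    by_cases hj : j = z0
    · rw [if_pos hj, hj]
      exact Finset.subset_union_left
    · rw [if_neg hj]
  refine ⟨q, A, ?_, ?_, ?_⟩
  · intro j k hjk
    simp only [hA]
    by_cases hj : j = z0 <;> by_cases hk : k = z0
    · exact absurd (hj.trans hk.symm) hjk
    · rw [if_pos hj, if_neg hk]
      rw [Finset.disjoint_union_left]
      subst hj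
      exact ⟨hA'dis z0 k (Ne.symm hk), ((hLdis k).symm : Disjoint L (A' k))⟩
    · rw [if_neg hj, if_pos hk]
      rw [Finset.disjoint_union_right]
      subst hk
      exact ⟨hA'dis j z0 hj, hLdis j⟩
    · rw [if_neg hj, if_neg hk]
      exact hA'dis j k hjk
  · apply subset_antisymm
    · apply Set.iUnion_subset
      intro j x hx
      exact hAS j hx
    · intro x hx
      by_cases hxb : x ∈ Finset.univ.biUnion A'
      · obtain ⟨j, _, hj⟩ := Finset.mem_biUnion.1 hxb
        exact Set.mem_iUnion.2 ⟨j, hA'sub j hj⟩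
      · refine Set.mem_iUnion.2 ⟨z0, ?_⟩
        have hxL : x ∈ L := by
          rw [hL, Finset.mem_sdiff]
          exact ⟨hx, hxb⟩
        show x ∈ A z0
        simp only [hA, if_true]
        exact Finset.mem_union_right _ hxL
  · intro j
    obtain ⟨h0, h1, h2⟩ := hB j
    have hsum : ∑ i ∈ T j, α j i = 1 := by
      rw [← h1]
      apply Finset.sum_subset (Finset.subset_univ _)
      intro i _ hi
      rw [hT, Finset.mem_filter] at hi
      push_neg at hi
      exact hi (Finset.mem_univ i)
    have hvec : ∑ i ∈ T j, α j i • (i : Fin d → ℝ) = q := by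
      rw [← h2]
      apply Finset.sum_subset (Finset.subset_univ _)
      intro i _ hi
      rw [hT, Finset.mem_filter] at hi
      push_neg at hi
      rw [hi (Finset.mem_univ i), zero_smul]
    have hkey : q = (T j).centerMass (α j) (fun i => (i : Fin d → ℝ)) := by
      unfold Finset.centerMass
      rw [hsum, hvec, inv_one, one_smul]
    rw [hkey]
    apply Finset.centerMass_mem_convexHull (T j) (fun i _ => h0 i)
      (by rw [hsum]; norm_num)
    intro i hi
    exact Finset.mem_coe.2 (hA'sub j (Finset.mem_image_of_mem _ hi))

end CascadeProof


theorem cascade_zero_dim_radon_set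
    (d : ℕ) (hd : 0 < d) (S : Finset (Fin d → ℝ)) (hS : S.Nonempty)
    (hdim : CovDimLE ↥(TverSet 2 S) 0)
    (a : ℕ) (ha : a = Module.finrank ℝ (affineSpan ℝ (S : Set (Fin d → ℝ))).direction) :
    ∀ r : ℕ, 1 ≤ r → r ≤ S.card - a → (TverSet r S).Nonempty := by
  intro r hr1 hrle
  rcases eq_or_lt_of_le hr1 with hr | hr2
  · subst hr
    obtain ⟨x₀, hx₀⟩ := hS
    refine ⟨x₀, fun _ => S, ?_, ?_, ?_⟩
    · intro i j hij
      exact absurd (Subsingleton.elim i j) hij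
    · exact Set.iUnion_const _
    · intro i
      exact subset_convexHull ℝ _ hx₀
  · have hr2' : 2 ≤ r := hr2
    have haS : a ≤ S.card := by
      by_contra h
      push_neg at h
      rw [Nat.sub_eq_zero_of_le h.le] at hrle
      omega
    have hna : r + a ≤ S.card := by omega
    have hrkeq := CascadeProof.finrank_ker_phi (S := S) hS
    have hvs_a : Module.finrank ℝ (vectorSpan ℝ (S : Set (Fin d → ℝ))) = a := by
      rw [ha, direction_affineSpan]
    rw [hvs_a] at hrkeq
    have hfin : 1 ≤ Module.finrank ℝ (LinearMap.ker (CascadeProof.Phi S)) := by omega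
    have hrk2 : r ≤ Module.finrank ℝ (LinearMap.ker (CascadeProof.Phi S)) + 1 := by omega
    obtain ⟨q, α, hB, hdisj⟩ := CascadeProof.exists_parts hdim hr1 hfin hrk2
    exact CascadeProof.tver_nonempty_of_parts hr1 hB hdisj
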